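/- For every natural number n≥3, the cycle C_n is a 50% max-tolerance graph. -/

import Mathlib

variable {V : Type*}

/-- A max-tolerance representation: each vertex `u` gets an interval `[a u, b u]` and a
positive tolerance `t u`, and distinct `u, v` are adjacent iff the length of
`[a u, b u] ∩ [a v, b v]` (zero if empty) is at least `max (t u) (t v)`. -/
def IsMaxTolRep (G : SimpleGraph V) (a b t : V → ℝ) : Prop :=
  (∀ u, a u ≤ b u) ∧ (∀ u, 0 < t u) ∧
    ∀ u v : V, u ≠ v →
      (G.Adj u v ↔ max (t u) (t v) ≤ max (min (b u) (b v) - max (a u) (a v)) 0)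

/-- A 50% max-tolerance graph: a max-tolerance representation in which each tolerance is
half the length of the corresponding interval. -/
def IsHalfMaxTolG (G : SimpleGraph V) : Prop :=
  ∃ a b : V → ℝ, IsMaxTolRep G a b (fun u => (b u - a u) / 2)

/-- The cycle `C_n` on vertices `0, …, n-1`, with edges exactly between cyclically
consecutive vertices. -/
def cycleG (n : ℕ) : SimpleGraph (Fin n) where
  Adj i j := i ≠ j ∧ (((i : ℕ) + 1) % n = (j : ℕ) ∨ ((j : ℕ) + 1) % n = (i : ℕ))
  symm := ⟨fun i j h => ⟨h.1.symm, h.2.symm⟩⟩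
  loopless := ⟨fun i h => h.1 rfl⟩

private lemma cycleG_adj {n : ℕ} (u v : Fin n) :
    (cycleG n).Adj u v ↔ (u ≠ v ∧ (((u : ℕ) + 1) % n = (v : ℕ) ∨ ((v : ℕ) + 1) % n = (u : ℕ))) :=
  Iff.rfl

private lemma htm_key (mu mv tu tv : ℝ) (hu : 0 < tu) (hv : 0 < tv) :
    max tu tv ≤ max (min (mu + tu) (mv + tv) - max (mu - tu) (mv - tv)) 0 ↔
      (tu ≤ 2 * tv ∧ tv ≤ 2 * tu ∧ mu - mv ≤ min tu tv ∧ mv - mu ≤ min tu tv) := by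
  constructor
  · intro h
    have h1 : tu ≤ max (min (mu + tu) (mv + tv) - max (mu - tu) (mv - tv)) 0 :=
      le_trans (le_max_left _ _) h
    have h2 : tv ≤ max (min (mu + tu) (mv + tv) - max (mu - tu) (mv - tv)) 0 :=
      le_trans (le_max_right _ _) h
    have h1' : tu ≤ min (mu + tu) (mv + tv) - max (mu - tu) (mv - tv) := by
      rcases le_max_iff.mp h1 with h' | h'
      · exact h'
      · linarith
    have h2' : tv ≤ min (mu + tu) (mv + tv) - max (mu - tu) (mv - tv) := by
      rcases le_max_iff.mp h2 with h' | h'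
      · exact h'
      · linarith
    have a1 : min (mu + tu) (mv + tv) ≤ mu + tu := min_le_left _ _
    have a2 : min (mu + tu) (mv + tv) ≤ mv + tv := min_le_right _ _
    have b1 : mu - tu ≤ max (mu - tu) (mv - tv) := le_max_left _ _
    have b2 : mv - tv ≤ max (mu - tu) (mv - tv) := le_max_right _ _
    exact ⟨by linarith, by linarith, le_min (by linarith) (by linarith),
      le_min (by linarith) (by linarith)⟩
  · rintro ⟨r1, r2, d1, d2⟩
    have d1u := le_trans d1 (min_le_left tu tv)
    have d1v := le_trans d1 (min_le_right tu tv)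
    have d2u := le_trans d2 (min_le_left tu tv)
    have d2v := le_trans d2 (min_le_right tu tv)
    have hA : tu + max (mu - tu) (mv - tv) ≤ min (mu + tu) (mv + tv) := by
      rcases max_cases (mu - tu) (mv - tv) with ⟨he, -⟩ | ⟨he, -⟩ <;> rw [he] <;>
        exact le_min (by linarith) (by linarith)
    have hB : tv + max (mu - tu) (mv - tv) ≤ min (mu + tu) (mv + tv) := by
      rcases max_cases (mu - tu) (mv - tv) with ⟨he, -⟩ | ⟨he, -⟩ <;> rw [he] <;>
        exact le_min (by linarith) (by linarith)
    refine le_trans (max_le ?_ ?_) (le_max_left _ _) <;> linarith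

noncomputable def q3 : ℝ := 2/3

private lemma q3_pos : (0:ℝ) < q3 := by norm_num [q3]
private lemma q3_lt_one : q3 < 1 := by norm_num [q3]
private lemma q3_pow_pos (k : ℕ) : (0:ℝ) < q3 ^ k := pow_pos q3_pos k
private lemma q3_mono {j k : ℕ} (h : j ≤ k) : q3 ^ k ≤ q3 ^ j :=
  pow_le_pow_of_le_one q3_pos.le q3_lt_one.le h
private lemma q3_strict {j k : ℕ} (h : j < k) : q3 ^ k < q3 ^ j :=
  pow_lt_pow_right_of_lt_one₀ q3_pos q3_lt_one h
private lemma q3_succ (k : ℕ) : q3 ^ (k+1) = (2/3) * q3 ^ k := by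
  rw [pow_succ, q3]; ring
private lemma q3_ratio2 (k : ℕ) : q3 ^ k ≤ 2 * q3 ^ (k+1) := by
  rw [q3_succ]; nlinarith [q3_pow_pos k]
private lemma q3_ratiofail {j k : ℕ} (h : j + 2 ≤ k) : 2 * q3 ^ k < q3 ^ j := by
  have h1 : q3 ^ k ≤ q3 ^ (j+2) := q3_mono h
  have h2 : q3 ^ (j+2) = (2/3) * ((2/3) * q3 ^ j) := by rw [q3_succ, q3_succ]
  nlinarith [q3_pow_pos j]
private lemma q3_le_one (k : ℕ) : q3 ^ k ≤ 1 :=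
  pow_le_one₀ q3_pos.le q3_lt_one.le

private lemma q3_le_23 {k : ℕ} (h : 1 ≤ k) : q3 ^ k ≤ 2/3 := by
  calc q3 ^ k ≤ q3 ^ 1 := q3_mono h
    _ = 2/3 := by rw [pow_one, q3]

private lemma q3_minpow (a b : ℕ) : min (q3 ^ a) (q3 ^ b) = q3 ^ (max a b) := by
  rcases le_total a b with h | h
  · rw [max_eq_right h, min_eq_right (q3_mono h)]
  · rw [max_eq_left h, min_eq_left (q3_mono h)]

private lemma htm_three : IsHalfMaxTolG (cycleG 3) := by
  refine ⟨fun _ => 0, fun _ => 2, fun u => by norm_num, fun u => by norm_num,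
    fun u v huv => ?_⟩
  constructor
  · intro _; norm_num
  · intro _
    refine (cycleG_adj u v).mpr ⟨huv, ?_⟩
    revert huv
    fin_cases u <;> fin_cases v <;> decide

private lemma htm_four : IsHalfMaxTolG (cycleG 4) := by
  refine ⟨fun v => if (v:ℕ) = 0 then (-1:ℝ) else if (v:ℕ) = 1 then -2 else
      if (v:ℕ) = 2 then -4/5 else -9/20,
    fun v => if (v:ℕ) = 0 then (1:ℝ) else if (v:ℕ) = 1 then 2 else
      if (v:ℕ) = 2 then 3 else 29/20, ?_, ?_, ?_⟩
  · intro u; fin_cases u <;> norm_num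
  · intro u; fin_cases u <;> norm_num
  · intro u v huv
    rw [cycleG_adj]
    fin_cases u <;> fin_cases v <;> first
      | exact absurd rfl huv
      | (norm_num [min_def, max_def]; try decide)

set_option maxHeartbeats 2000000 in
private lemma htm_general (n : ℕ) (hn : 5 ≤ n) : IsHalfMaxTolG (cycleG n) := by
  set R := (n - 3) / 2 with hRdef
  set L := n - 3 - R with hLdef
  have hR1 : 1 ≤ R := by omega
  have hL1 : 1 ≤ L := by omega
  have hRL : R ≤ L := by omega
  have hLR : L ≤ R + 1 := by omega
  have hsum : L + R = n - 3 := by omega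
  have hxL1 : q3 ^ L ≤ 2/3 := q3_le_23 hL1
  have hxR1 : q3 ^ R ≤ 2/3 := q3_le_23 hR1
  set β : ℝ := (2 - q3 ^ L) / (2 - q3 ^ L - q3 ^ R) with hβdef
  have hden : 0 < 2 - q3 ^ L - q3 ^ R := by nlinarith
  have hb1 : 1 < β := by
    rw [hβdef, lt_div_iff₀ hden]
    nlinarith [q3_pow_pos R]
  have hb2 : β ≤ 2 := by
    rw [hβdef, div_le_iff₀ hden]
    have hkey : q3 ^ L + 2 * q3 ^ R ≤ 2 := by
      rcases (by omega : L = R ∨ L = R + 1) with h | h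
      · rw [h]; nlinarith
      · rw [h, q3_succ]; nlinarith [q3_pow_pos R]
    linarith
  have hjunc : 2 - β * (2 - q3 ^ L - q3 ^ R) = q3 ^ L := by
    have h := div_mul_cancel₀ (2 - q3 ^ L) (ne_of_gt hden)
    rw [hβdef]
    linarith [h]
  have hcross : ∀ j k : ℕ, j ≤ L → k ≤ R → ¬(j = L ∧ k = R) →
      q3 ^ (max j k) < q3 ^ L + β * (q3 ^ j + q3 ^ k - q3 ^ L - q3 ^ R) := by
    intro j k hj hk hne
    have hPj : q3 ^ L ≤ q3 ^ j := q3_mono hj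
    have hPk : q3 ^ R ≤ q3 ^ k := q3_mono hk
    have hν : q3 ^ L ≤ q3 ^ (max j k) := q3_mono (by omega : max j k ≤ L)
    by_cases hμ : min j k < R
    · have hstrict : q3 ^ R < q3 ^ (min j k) := q3_strict hμ
      have hmm : q3 ^ j + q3 ^ k = q3 ^ (min j k) + q3 ^ (max j k) := by
        rcases le_total j k with h | h
        · rw [min_eq_left h, max_eq_right h]
        · rw [min_eq_right h, max_eq_left h]; ring
      have hP : q3 ^ (max j k) - q3 ^ L < q3 ^ j + q3 ^ k - q3 ^ L - q3 ^ R := by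
        rw [hmm]; linarith
      have hP0 : 0 ≤ q3 ^ j + q3 ^ k - q3 ^ L - q3 ^ R := by linarith
      have hbP : q3 ^ j + q3 ^ k - q3 ^ L - q3 ^ R ≤
          β * (q3 ^ j + q3 ^ k - q3 ^ L - q3 ^ R) :=
        le_mul_of_one_le_left hP0 hb1.le
      linarith
    · have hkR : k = R := by omega
      have hjL : j ≠ L := fun h => hne ⟨h, hkR⟩
      have hjL' : j < L := by omega
      have hmaxj : max j k = j := by omega
      have hstrict : q3 ^ L < q3 ^ j := q3_strict hjL'
      rw [hmaxj, hkR]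
      rw [show q3 ^ j + q3 ^ R - q3 ^ L - q3 ^ R = q3 ^ j - q3 ^ L by ring]
      have hP : 0 < q3 ^ j - q3 ^ L := by linarith
      have := (lt_mul_iff_one_lt_left hP).mpr hb1
      linarith
  set T : Fin n → ℝ := fun v => if (v : ℕ) = n - 1 then 2
      else q3 ^ (min (v : ℕ) (n - 2 - (v : ℕ))) with hTdef
  set M : Fin n → ℝ := fun v => if (v : ℕ) = n - 1 then 0
      else (if (v : ℕ) ≤ L then β * (1 - q3 ^ (v : ℕ)) - 1
        else 1 - β * (1 - q3 ^ (n - 2 - (v : ℕ)))) with hMdef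
  have hTpos : ∀ v, 0 < T v := by
    intro v
    rw [hTdef]
    dsimp only
    split
    · norm_num
    · exact q3_pow_pos _
  have main : ∀ u v : Fin n, (u : ℕ) < (v : ℕ) →
      ((cycleG n).Adj u v ↔ (T u ≤ 2 * T v ∧ T v ≤ 2 * T u ∧
        M u - M v ≤ min (T u) (T v) ∧ M v - M u ≤ min (T u) (T v))) := by
    intro u v huv
    have hvlt : (v : ℕ) < n := v.isLt
    have hune : ¬((u : ℕ) = n - 1) := by omega
    have hneq : u ≠ v := by
      intro h; rw [h] at huv; exact lt_irrefl _ huv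
    have hadj : (cycleG n).Adj u v ↔
        ((v : ℕ) = (u : ℕ) + 1 ∨ ((u : ℕ) = 0 ∧ (v : ℕ) = n - 1)) := by
      rw [cycleG_adj]
      have h1 : ((u : ℕ) + 1) % n = (u : ℕ) + 1 := Nat.mod_eq_of_lt (by omega)
      constructor
      · rintro ⟨-, h | h⟩
        · rw [h1] at h; left; omega
        · rcases Nat.lt_or_ge ((v : ℕ) + 1) n with h' | h'
          · rw [Nat.mod_eq_of_lt h'] at h; omega
          · have hv1 : (v : ℕ) = n - 1 := by omega
            have h0 : ((v : ℕ) + 1) % n = 0 := by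
              rw [show (v : ℕ) + 1 = n by omega, Nat.mod_self]
            rw [h0] at h
            right; exact ⟨h.symm, hv1⟩
      · intro h
        refine ⟨hneq, ?_⟩
        rcases h with h | ⟨h0, hv1⟩
        · left; rw [h1]; omega
        · right; rw [show (v : ℕ) + 1 = n by omega, Nat.mod_self]; omega
    rw [hadj]
    have hTu : T u = q3 ^ (min (u : ℕ) (n - 2 - (u : ℕ))) := by
      rw [hTdef]; dsimp only; rw [if_neg hune]
    by_cases hhub : (v : ℕ) = n - 1
    · have hTv : T v = 2 := by rw [hTdef]; dsimp only; rw [if_pos hhub]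
      have hMv : M v = 0 := by rw [hMdef]; dsimp only; rw [if_pos hhub]
      rw [hTv, hMv, hTu]
      constructor
      · intro h
        have hu0 : (u : ℕ) = 0 ∨ (u : ℕ) = n - 2 := by
          rcases h with h | ⟨h, -⟩ <;> omega
        have hl0 : min (u : ℕ) (n - 2 - (u : ℕ)) = 0 := by
          rcases hu0 with h0 | h0 <;> omega
        rw [hl0, pow_zero]
        have hMu : M u = -1 ∨ M u = 1 := by
          rw [hMdef]; dsimp only; rw [if_neg hune]
          rcases hu0 with h0 | h0
          · left; rw [if_pos (by omega : (u : ℕ) ≤ L), h0, pow_zero]; ring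
          · right
            rw [if_neg (by omega : ¬((u : ℕ) ≤ L)),
              show n - 2 - (u : ℕ) = 0 by omega, pow_zero]
            ring
        rcases hMu with h' | h' <;> rw [h'] <;> norm_num
      · rintro ⟨-, h2, -, -⟩
        have hl0 : min (u : ℕ) (n - 2 - (u : ℕ)) = 0 := by
          by_contra hc
          have hge : 1 ≤ min (u : ℕ) (n - 2 - (u : ℕ)) := by omega
          linarith [q3_le_23 hge]
        have : (u : ℕ) = 0 ∨ (u : ℕ) = n - 2 := by omega
        rcases this with h0 | h0
        · right; exact ⟨h0, hhub⟩
        · left; omega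
    · -- non-hub case
      have hv2 : (v : ℕ) ≤ n - 2 := by omega
      have hTv : T v = q3 ^ (min (v : ℕ) (n - 2 - (v : ℕ))) := by
        rw [hTdef]; dsimp only; rw [if_neg hhub]
      have hor : ((v : ℕ) = (u : ℕ) + 1 ∨ ((u : ℕ) = 0 ∧ (v : ℕ) = n - 1)) ↔
          (v : ℕ) = (u : ℕ) + 1 := by
        constructor
        · rintro (h | ⟨-, h⟩)
          · exact h
          · exact absurd h hhub
        · exact Or.inl
      rw [hor]
      by_cases huL : (u : ℕ) ≤ L
      · have hlu : min (u : ℕ) (n - 2 - (u : ℕ)) = (u : ℕ) := by omega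
        have hMu : M u = β * (1 - q3 ^ (u : ℕ)) - 1 := by
          rw [hMdef]; dsimp only; rw [if_neg hune, if_pos huL]
        by_cases hvL : (v : ℕ) ≤ L
        · -- both left
          have hlv : min (v : ℕ) (n - 2 - (v : ℕ)) = (v : ℕ) := by omega
          have hMv : M v = β * (1 - q3 ^ (v : ℕ)) - 1 := by
            rw [hMdef]; dsimp only; rw [if_neg hhub, if_pos hvL]
          rw [hTu, hTv, hMu, hMv, hlu, hlv]
          constructor
          · intro h
            rw [h]
            have hmin : min (q3 ^ (u : ℕ)) (q3 ^ ((u : ℕ) + 1)) = q3 ^ ((u : ℕ) + 1) :=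
              min_eq_right (q3_mono (Nat.le_succ _))
            rw [hmin]
            have hsucc := q3_succ (u : ℕ)
            have hpos := q3_pow_pos (u : ℕ)
            have hmul : (0:ℝ) ≤ (2 - β) * q3 ^ (u : ℕ) :=
              mul_nonneg (by linarith) hpos.le
            refine ⟨q3_ratio2 _, by nlinarith [q3_mono (Nat.le_succ (u : ℕ))], ?_, ?_⟩
            · rw [show β * (1 - q3 ^ (u : ℕ)) - 1 - (β * (1 - q3 ^ ((u : ℕ) + 1)) - 1)
                = β * (q3 ^ ((u : ℕ) + 1) - q3 ^ (u : ℕ)) by ring]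
              nlinarith [q3_pow_pos ((u : ℕ) + 1)]
            · rw [show β * (1 - q3 ^ ((u : ℕ) + 1)) - 1 - (β * (1 - q3 ^ (u : ℕ)) - 1)
                = β * (q3 ^ (u : ℕ) - q3 ^ ((u : ℕ) + 1)) by ring]
              nlinarith
          · rintro ⟨c1, -, -, -⟩
            by_contra hne2
            have hge : (u : ℕ) + 2 ≤ (v : ℕ) := by omega
            linarith [q3_ratiofail hge]
        · -- cross: u left, v right
          have hk : n - 2 - (v : ℕ) ≤ R := by omega
          have hlv : min (v : ℕ) (n - 2 - (v : ℕ)) = n - 2 - (v : ℕ) := by omega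
          have hMv : M v = 1 - β * (1 - q3 ^ (n - 2 - (v : ℕ))) := by
            rw [hMdef]; dsimp only; rw [if_neg hhub, if_neg hvL]
          rw [hTu, hTv, hMu, hMv, hlu, hlv]
          constructor
          · intro h
            have hiL : (u : ℕ) = L := by omega
            have hkR : n - 2 - (v : ℕ) = R := by omega
            rw [hiL, hkR]
            have hmin : min (q3 ^ L) (q3 ^ R) = q3 ^ L := min_eq_left (q3_mono hRL)
            rw [hmin]
            have e1 : (1 - β * (1 - q3 ^ R)) - (β * (1 - q3 ^ L) - 1)
                = 2 - β * (2 - q3 ^ L - q3 ^ R) := by ring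
            have e2 : (β * (1 - q3 ^ L) - 1) - (1 - β * (1 - q3 ^ R))
                = -(2 - β * (2 - q3 ^ L - q3 ^ R)) := by ring
            refine ⟨?_, ?_, ?_, ?_⟩
            · linarith [q3_mono hRL, q3_pow_pos R]
            · linarith [q3_ratio2 R, q3_mono hLR]
            · rw [e2, hjunc]; linarith [q3_pow_pos L]
            · rw [e1, hjunc]
          · rintro ⟨-, -, -, c4⟩
            by_contra hne2
            have hnot : ¬((u : ℕ) = L ∧ n - 2 - (v : ℕ) = R) := by
              rintro ⟨ha, hb⟩; exact hne2 (by omega)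
            have hc := hcross (u : ℕ) (n - 2 - (v : ℕ)) huL hk hnot
            have e : (1 - β * (1 - q3 ^ (n - 2 - (v : ℕ)))) - (β * (1 - q3 ^ (u : ℕ)) - 1)
                = q3 ^ L + β * (q3 ^ (u : ℕ) + q3 ^ (n - 2 - (v : ℕ)) - q3 ^ L - q3 ^ R)
                  + (2 - β * (2 - q3 ^ L - q3 ^ R) - q3 ^ L) := by ring
            rw [hjunc] at e
            rw [q3_minpow] at c4
            rw [e] at c4
            simp only [sub_self, add_zero] at c4
            linarith
      · -- both right
        have hvL : ¬((v : ℕ) ≤ L) := by omega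
        have hlu : min (u : ℕ) (n - 2 - (u : ℕ)) = n - 2 - (u : ℕ) := by omega
        have hlv : min (v : ℕ) (n - 2 - (v : ℕ)) = n - 2 - (v : ℕ) := by omega
        have hMu : M u = 1 - β * (1 - q3 ^ (n - 2 - (u : ℕ))) := by
          rw [hMdef]; dsimp only; rw [if_neg hune, if_neg huL]
        have hMv : M v = 1 - β * (1 - q3 ^ (n - 2 - (v : ℕ))) := by
          rw [hMdef]; dsimp only; rw [if_neg hhub, if_neg hvL]
        rw [hTu, hTv, hMu, hMv, hlu, hlv]
        set ku := n - 2 - (u : ℕ) with hkudef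
        set kv := n - 2 - (v : ℕ) with hkvdef
        have hkuv : kv < ku := by omega
        constructor
        · intro h
          have hk1 : ku = kv + 1 := by omega
          rw [hk1]
          have hmin : min (q3 ^ (kv + 1)) (q3 ^ kv) = q3 ^ (kv + 1) :=
            min_eq_left (q3_mono (Nat.le_succ _))
          rw [hmin]
          have hsucc := q3_succ kv
          have hpos := q3_pow_pos kv
          have hmul : (0:ℝ) ≤ (2 - β) * q3 ^ kv := mul_nonneg (by linarith) hpos.le
          refine ⟨by nlinarith [q3_mono (Nat.le_succ kv)], q3_ratio2 _, ?_, ?_⟩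
          · rw [show (1 - β * (1 - q3 ^ (kv + 1))) - (1 - β * (1 - q3 ^ kv))
              = β * (q3 ^ (kv + 1) - q3 ^ kv) by ring]
            nlinarith [q3_pow_pos (kv + 1)]
          · rw [show (1 - β * (1 - q3 ^ kv)) - (1 - β * (1 - q3 ^ (kv + 1)))
              = β * (q3 ^ kv - q3 ^ (kv + 1)) by ring]
            nlinarith
        · rintro ⟨-, c2, -, -⟩
          by_contra hne2
          have hge : kv + 2 ≤ ku := by omega
          linarith [q3_ratiofail hge]
  refine ⟨fun v => M v - T v, fun v => M v + T v, ?_, ?_, ?_⟩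
  · intro w
    have := hTpos w
    dsimp only
    linarith
  · intro w
    have := hTpos w
    dsimp only
    linarith
  · intro u v huv
    dsimp only
    have e1 : (M u + T u - (M u - T u)) / 2 = T u := by ring
    have e2 : (M v + T v - (M v - T v)) / 2 = T v := by ring
    rw [e1, e2, htm_key (M u) (M v) (T u) (T v) (hTpos u) (hTpos v)]
    rcases Nat.lt_trichotomy (u : ℕ) (v : ℕ) with h | h | h
    · exact main u v h
    · exact absurd (Fin.ext h) huv
    · rw [SimpleGraph.adj_comm, main v u h]
      constructor
      · rintro ⟨a1, a2, a3, a4⟩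
        exact ⟨a2, a1, by rwa [min_comm], by rwa [min_comm]⟩
      · rintro ⟨a1, a2, a3, a4⟩
        exact ⟨a2, a1, by rwa [min_comm], by rwa [min_comm]⟩

/-- For every `n ≥ 3`, the cycle `C_n` is a 50% max-tolerance graph. -/
theorem cycle_is_half_maxtol (n : ℕ) (hn : 3 ≤ n) : IsHalfMaxTolG (cycleG n) := by
  rcases (by omega : n = 3 ∨ n = 4 ∨ 5 ≤ n) with h | h | h
  · subst h; exact htm_three
  · subst h; exact htm_four
  · exact htm_general n h
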